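/- With the transmutation identity above and $\psi(x) = (\epsilon - x)^2$, define $g_\epsilon(x) = \psi(x) + \int_x^\epsilon H(t,x)\psi(t)\,dt$ for $0 \le x \le \epsilon$ and $g_\epsilon(x) = 0$ for $x > \epsilon$. Then for every $\lambda > 0$, $\int_0^\epsilon g_\epsilon(x)\,y(x,\lambda)\,dx = 2\,\frac{\epsilon\sqrt{\lambda} - \sin(\epsilon\sqrt{\lambda})}{\lambda\sqrt{\lambda}} \neq 0$. -/

import Mathlib

open Real Set MeasureTheory

theorem g_eps_transform_nonzero
    (ε : ℝ) (hε : 0 < ε) (lam : ℝ) (hlam : 0 < lam)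
    (H : ℝ → ℝ → ℝ)
    (hH : ContinuousOn (fun p : ℝ × ℝ => H p.1 p.2)
      {p : ℝ × ℝ | 0 ≤ p.2 ∧ p.2 ≤ p.1 ∧ p.1 ≤ ε})
    (y : ℝ → ℝ → ℝ) (hy : Continuous fun x => y x lam)
    (htra : ∀ x ∈ Icc (0:ℝ) ε,
      Real.cos (x * Real.sqrt lam) = y x lam + ∫ t in (0:ℝ)..x, H x t * y t lam)
    (g : ℝ → ℝ)
    (hg : ∀ x ∈ Icc (0:ℝ) ε, g x = (ε - x)^2 + ∫ t in x..ε, H t x * (ε - t)^2)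
    (hg0 : ∀ x : ℝ, ε < x → g x = 0) :
    (∫ x in (0:ℝ)..ε, g x * y x lam) =
      2 * (ε * Real.sqrt lam - Real.sin (ε * Real.sqrt lam)) / (lam * Real.sqrt lam) ∧
    (∫ x in (0:ℝ)..ε, g x * y x lam) ≠ 0 := by
  set s := Real.sqrt lam with hs_def
  have hs : 0 < s := Real.sqrt_pos.2 hlam
  have hs2 : s ^ 2 = lam := Real.sq_sqrt hlam.le
  set T : Set (ℝ × ℝ) := {p : ℝ × ℝ | 0 ≤ p.2 ∧ p.2 ≤ p.1 ∧ p.1 ≤ ε} with hT_def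
  have hTclosed : IsClosed T :=
    (isClosed_le continuous_const continuous_snd).inter
      ((isClosed_le continuous_snd continuous_fst).inter
        (isClosed_le continuous_fst continuous_const))
  have hTsub : T ⊆ Icc (0,0) (ε,ε) := by
    rintro ⟨t, x⟩ ⟨h1, h2, h3⟩
    exact ⟨⟨by dsimp at *; linarith, h1⟩, ⟨h3, by dsimp at *; linarith⟩⟩
  have hTcomp : IsCompact T := isCompact_Icc.of_isClosed_subset hTclosed hTsub
  have hTm : MeasurableSet T := hTclosed.measurableSet
  set F : ℝ × ℝ → ℝ := T.indicator (fun p => H p.1 p.2 * (ε - p.1)^2 * y p.2 lam) with hF_def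
  have hcont : ContinuousOn (fun p : ℝ × ℝ => H p.1 p.2 * (ε - p.1)^2 * y p.2 lam) T :=
    (hH.mul (((continuous_const.sub continuous_fst).pow 2).continuousOn)).mul
      ((hy.comp continuous_snd).continuousOn)
  have hFint : Integrable F (volume : Measure (ℝ × ℝ)) := by
    rw [hF_def, integrable_indicator_iff hTm]
    exact hcont.integrableOn_compact hTcomp
  have hFprod : Integrable F ((volume : Measure ℝ).prod volume) := by
    rwa [← Measure.volume_eq_prod]
  -- inner integral in t, for fixed x
  have hxinner : ∀ x ∈ Icc (0:ℝ) ε,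
      (∫ t, F (t, x)) = (∫ t in x..ε, H t x * (ε - t)^2) * y x lam := by
    intro x hx
    have hset : ∀ t : ℝ, ((t, x) ∈ T ↔ t ∈ Icc x ε) := fun t => by
      simp only [hT_def, mem_setOf_eq, mem_Icc]
      exact ⟨fun h => ⟨h.2.1, h.2.2⟩, fun h => ⟨hx.1, h.1, h.2⟩⟩
    have heq : (fun t => F (t, x)) =
        (Icc x ε).indicator (fun t => H t x * (ε - t)^2 * y x lam) := by
      funext t
      by_cases h : t ∈ Icc x ε
      · rw [indicator_of_mem h, hF_def, indicator_of_mem ((hset t).2 h)]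
      · rw [indicator_of_notMem h, hF_def,
          indicator_of_notMem (fun hc => h ((hset t).1 hc))]
    rw [heq, integral_indicator measurableSet_Icc, integral_Icc_eq_integral_Ioc,
      ← intervalIntegral.integral_of_le hx.2, intervalIntegral.integral_mul_const]
  have hxzero : ∀ x : ℝ, x ∉ Icc (0:ℝ) ε → (∫ t, F (t, x)) = 0 := by
    intro x hx
    have heq : (fun t => F (t, x)) = fun _ => (0:ℝ) := by
      funext t
      refine indicator_of_notMem (fun hc => hx ?_) _
      exact ⟨hc.1, le_trans hc.2.1 hc.2.2⟩
    rw [heq, integral_zero]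
  -- inner integral in x, for fixed t
  have htinner : ∀ t ∈ Icc (0:ℝ) ε,
      (∫ x, F (t, x)) = (ε - t)^2 * ∫ x in (0:ℝ)..t, H t x * y x lam := by
    intro t ht
    have hset : ∀ x : ℝ, ((t, x) ∈ T ↔ x ∈ Icc 0 t) := fun x => by
      simp only [hT_def, mem_setOf_eq, mem_Icc]
      exact ⟨fun h => ⟨h.1, h.2.1⟩, fun h => ⟨h.1, h.2, ht.2⟩⟩
    have heq : (fun x => F (t, x)) =
        (Icc (0:ℝ) t).indicator (fun x => H t x * (ε - t)^2 * y x lam) := by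
      funext x
      by_cases h : x ∈ Icc (0:ℝ) t
      · rw [indicator_of_mem h, hF_def, indicator_of_mem ((hset x).2 h)]
      · rw [indicator_of_notMem h, hF_def,
          indicator_of_notMem (fun hc => h ((hset x).1 hc))]
    rw [heq, integral_indicator measurableSet_Icc, integral_Icc_eq_integral_Ioc,
      ← intervalIntegral.integral_of_le ht.1, ← intervalIntegral.integral_const_mul]
    exact intervalIntegral.integral_congr (fun x _ => by ring)
  have htzero : ∀ t : ℝ, t ∉ Icc (0:ℝ) ε → (∫ x, F (t, x)) = 0 := by
    intro t ht
    have heq : (fun x => F (t, x)) = fun _ => (0:ℝ) := by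
      funext x
      refine indicator_of_notMem (fun hc => ht ?_) _
      exact ⟨le_trans hc.1 hc.2.1, hc.2.2⟩
    rw [heq, integral_zero]
  -- marginal integrability
  have hmargx : Integrable (fun x => ∫ t, F (t, x)) (volume : Measure ℝ) :=
    hFprod.integral_prod_right
  have hmargt : Integrable (fun t => ∫ x, F (t, x)) (volume : Measure ℝ) :=
    hFprod.integral_prod_left
  have hA : IntervalIntegrable (fun x => (ε - x)^2 * y x lam) volume 0 ε := by
    apply Continuous.intervalIntegrable
    exact ((continuous_const.sub continuous_id).pow 2).mul hy
  have hB : IntervalIntegrable (fun x => (∫ t in x..ε, H t x * (ε - t)^2) * y x lam)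
      volume 0 ε := by
    rw [intervalIntegrable_iff_integrableOn_Ioc_of_le hε.le]
    exact (hmargx.integrableOn).congr_fun
      (fun x hx => (hxinner x (Ioc_subset_Icc_self hx))) measurableSet_Ioc
  have hC : IntervalIntegrable (fun t => (ε - t)^2 * ∫ x in (0:ℝ)..t, H t x * y x lam)
      volume 0 ε := by
    rw [intervalIntegrable_iff_integrableOn_Ioc_of_le hε.le]
    exact (hmargt.integrableOn).congr_fun
      (fun t ht => (htinner t (Ioc_subset_Icc_self ht))) measurableSet_Ioc
  -- Fubini step
  have hT2 : (∫ x in (0:ℝ)..ε, (∫ t in x..ε, H t x * (ε - t)^2) * y x lam)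
      = ∫ t in (0:ℝ)..ε, (ε - t)^2 * ∫ x in (0:ℝ)..t, H t x * y x lam := by
    have e1 : (∫ x in (0:ℝ)..ε, (∫ t in x..ε, H t x * (ε - t)^2) * y x lam)
        = ∫ x, ∫ t, F (t, x) := by
      rw [intervalIntegral.integral_of_le hε.le, ← integral_Icc_eq_integral_Ioc,
        ← setIntegral_eq_integral_of_forall_compl_eq_zero hxzero]
      exact setIntegral_congr_fun measurableSet_Icc (fun x hx => (hxinner x hx).symm)
    have e2 : (∫ t, ∫ x, F (t, x))
        = ∫ t in (0:ℝ)..ε, (ε - t)^2 * ∫ x in (0:ℝ)..t, H t x * y x lam := by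
      rw [intervalIntegral.integral_of_le hε.le, ← integral_Icc_eq_integral_Ioc,
        ← setIntegral_eq_integral_of_forall_compl_eq_zero htzero]
      exact setIntegral_congr_fun measurableSet_Icc (fun t ht => (htinner t ht))
    have hswap : (∫ t, ∫ x, F (t, x)) = ∫ x, ∫ t, F (t, x) :=
      integral_integral_swap (f := fun t x => F (t, x)) hFprod
    rw [e1, ← hswap, e2]
  -- main computation
  have key : (∫ x in (0:ℝ)..ε, g x * y x lam)
      = ∫ t in (0:ℝ)..ε, (ε - t)^2 * Real.cos (t * s) := by
    have step1 : (∫ x in (0:ℝ)..ε, g x * y x lam)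
        = ∫ x in (0:ℝ)..ε, ((ε - x)^2 * y x lam
            + (∫ t in x..ε, H t x * (ε - t)^2) * y x lam) := by
      apply intervalIntegral.integral_congr
      intro x hx
      rw [uIcc_of_le hε.le] at hx
      show g x * y x lam = _
      rw [hg x hx]; ring
    rw [step1, intervalIntegral.integral_add hA hB, hT2,
      ← intervalIntegral.integral_add hA hC]
    apply intervalIntegral.integral_congr
    intro t ht
    rw [uIcc_of_le hε.le] at ht
    show _ = (ε - t)^2 * Real.cos (t * s)
    rw [htra t ht]
    ring
  -- explicit value
  have hval : (∫ t in (0:ℝ)..ε, (ε - t)^2 * Real.cos (t * s))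
      = 2 * (ε * s - Real.sin (ε * s)) / (lam * s) := by
    have hderiv : ∀ t ∈ uIcc (0:ℝ) ε, HasDerivAt
        (fun u => (ε-u)^2 * Real.sin (u*s) / s - 2*(ε-u)*Real.cos (u*s) / s^2
          - 2*Real.sin (u*s)/s^3)
        ((ε - t)^2 * Real.cos (t*s)) t := by
      intro t _
      have h1 : HasDerivAt (fun u : ℝ => ε - u) (-1) t := by
        simpa using (hasDerivAt_id t).const_sub ε
      have hsin : HasDerivAt (fun u : ℝ => Real.sin (u*s)) (Real.cos (t*s) * s) t := by
        simpa using ((hasDerivAt_id t).mul_const s).sin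
      have hcos : HasDerivAt (fun u : ℝ => Real.cos (u*s)) (-Real.sin (t*s) * s) t := by
        simpa using ((hasDerivAt_id t).mul_const s).cos
      have hsq : HasDerivAt (fun u : ℝ => (ε-u)^2) (2 * (ε-t) ^ 1 * (-1)) t := by
        simpa using h1.fun_pow 2
      have := (((hsq.mul hsin).div_const s).sub
        (((h1.const_mul 2).mul hcos).div_const (s^2))).sub
        ((hsin.const_mul 2).div_const (s^3))
      refine this.congr_deriv ?_
      have hs0 : s ≠ 0 := hs.ne'
      field_simp
      ring
    have hci : Continuous fun u : ℝ => (ε - u)^2 * Real.cos (u*s) := by fun_prop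
    rw [intervalIntegral.integral_eq_sub_of_hasDerivAt hderiv (hci.intervalIntegrable 0 ε)]
    rw [← hs2]
    simp only [Real.sin_zero, Real.cos_zero, zero_mul, mul_zero, mul_one]
    field_simp
    ring
  have hpos : 0 < 2 * (ε * s - Real.sin (ε * s)) / (lam * s) := by
    have h1 : 0 < ε * s := mul_pos hε hs
    have h2 : Real.sin (ε * s) < ε * s := Real.sin_lt h1
    apply div_pos (by linarith) (mul_pos hlam hs)
  exact ⟨key.trans hval, by rw [key.trans hval]; exact ne_of_gt hpos⟩
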